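/- For t > 1, the limit of f_α^sw(t) = (1-α)(1 - t^{1/α})/(1 - t^{(1-α)/α}) as α → 0 from above equals t; and for 0 < t < 1, this limit equals 1. -/

import Mathlib

open Filter

/-- Helper: exponent tending to -∞ with base > 1 gives t ^ e α → 0. -/
lemma rpow_tendsto_zero_of_atBot {t : ℝ} (ht : 1 < t) {l : Filter ℝ} {e : ℝ → ℝ}
    (he : Tendsto e l atBot) : Tendsto (fun α => t ^ e α) l (nhds 0) := by
  have ht0 : 0 < t := lt_trans one_pos ht
  have hlog : 0 < Real.log t := Real.log_pos ht
  have h1 : Tendsto (fun α => e α * Real.log t) l atBot :=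
    Tendsto.atBot_mul_const hlog he
  have h2 : Tendsto (fun α => Real.exp (e α * Real.log t)) l (nhds 0) :=
    Real.tendsto_exp_atBot.comp h1
  refine h2.congr (fun α => ?_)
  rw [Real.rpow_def_of_pos ht0, mul_comm]

/-- Helper: exponent tending to +∞ with base < 1 gives t ^ e α → 0. -/
lemma rpow_tendsto_zero_of_atTop {t : ℝ} (ht0 : 0 < t) (ht : t < 1) {l : Filter ℝ} {e : ℝ → ℝ}
    (he : Tendsto e l atTop) : Tendsto (fun α => t ^ e α) l (nhds 0) := by
  have hlog : Real.log t < 0 := Real.log_neg ht0 ht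
  have h1 : Tendsto (fun α => e α * Real.log t) l atBot :=
    Tendsto.atTop_mul_const_of_neg hlog he
  have h2 : Tendsto (fun α => Real.exp (e α * Real.log t)) l (nhds 0) :=
    Real.tendsto_exp_atBot.comp h1
  refine h2.congr (fun α => ?_)
  rw [Real.rpow_def_of_pos ht0, mul_comm]

theorem fSW_tendsto_zero_right (t : ℝ) (ht : 0 < t) (ht1 : t ≠ 1) :
    (1 < t → Tendsto (fun α : ℝ => (1 - α) * (1 - t ^ (1 / α)) / (1 - t ^ ((1 - α) / α)))
      (nhdsWithin 0 (Set.Ioi 0)) (nhds t)) ∧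
    (t < 1 → Tendsto (fun α : ℝ => (1 - α) * (1 - t ^ (1 / α)) / (1 - t ^ ((1 - α) / α)))
      (nhdsWithin 0 (Set.Ioi 0)) (nhds 1)) := by
  have hinv : Tendsto (fun α : ℝ => 1 / α) (nhdsWithin 0 (Set.Ioi 0)) atTop := by
    simpa [one_div] using tendsto_inv_nhdsGT_zero
  have hexp1 : Tendsto (fun α : ℝ => (1 - α) / α) (nhdsWithin 0 (Set.Ioi 0)) atTop := by
    have : Tendsto (fun α : ℝ => 1 / α - 1) (nhdsWithin 0 (Set.Ioi 0)) atTop :=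
      tendsto_atTop_add_const_right _ (-1) hinv |>.congr (fun α => by ring)
    refine this.congr' ?_
    filter_upwards [self_mem_nhdsWithin] with α (hα : 0 < α)
    field_simp
  have hexp2 : Tendsto (fun α : ℝ => (α - 1) / α) (nhdsWithin 0 (Set.Ioi 0)) atBot := by
    have : Tendsto (fun α : ℝ => -((1 - α) / α)) (nhdsWithin 0 (Set.Ioi 0)) atBot :=
      tendsto_neg_atBot_iff.mpr hexp1
    refine this.congr (fun α => by ring)
  have hone : Tendsto (fun α : ℝ => 1 - α) (nhdsWithin 0 (Set.Ioi 0)) (nhds 1) := by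
    have : Tendsto (fun α : ℝ => 1 - α) (nhds 0) (nhds (1 - 0)) :=
      tendsto_const_nhds.sub tendsto_id
    simpa using this.mono_left nhdsWithin_le_nhds
  constructor
  · intro ht'
    -- rewrite f α = (1-α) * (t^((α-1)/α) - t) / (t^((α-1)/α) - 1)
    have hu : Tendsto (fun α : ℝ => t ^ ((α - 1) / α)) (nhdsWithin 0 (Set.Ioi 0)) (nhds 0) :=
      rpow_tendsto_zero_of_atBot ht' hexp2
    have hlim : Tendsto (fun α : ℝ => (1 - α) * (t ^ ((α - 1) / α) - t) / (t ^ ((α - 1) / α) - 1))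
        (nhdsWithin 0 (Set.Ioi 0)) (nhds t) := by
      have hnum : Tendsto (fun α : ℝ => (1 - α) * (t ^ ((α - 1) / α) - t))
          (nhdsWithin 0 (Set.Ioi 0)) (nhds (1 * (0 - t))) :=
        hone.mul (hu.sub tendsto_const_nhds)
      have hden : Tendsto (fun α : ℝ => t ^ ((α - 1) / α) - 1)
          (nhdsWithin 0 (Set.Ioi 0)) (nhds (0 - 1)) := hu.sub tendsto_const_nhds
      have := hnum.div hden (by norm_num)
      simpa [Pi.div_def] using this
    refine hlim.congr' ?_
    filter_upwards [self_mem_nhdsWithin] with α (hα : 0 < α)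
    set B := t ^ ((1 - α) / α) with hBdef
    have hB : 0 < B := Real.rpow_pos_of_pos ht _
    have h1 : t ^ (1 / α) = B * t := by
      have hx : (1:ℝ) / α = (1 - α) / α + 1 := by field_simp; ring
      rw [hBdef, hx, Real.rpow_add ht, Real.rpow_one]
    have h2 : t ^ ((α - 1) / α) = B⁻¹ := by
      rw [hBdef, ← Real.rpow_neg ht.le]
      congr 1
      ring
    rw [h2, h1]
    have e1 : B⁻¹ - t = (1 - B * t) / B := by field_simp
    have e2 : B⁻¹ - 1 = (1 - B) / B := by field_simp
    rw [e1, e2, mul_div_assoc, div_div_div_comm, div_self hB.ne', div_one, ← mul_div_assoc]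
  · intro ht'
    have hu : Tendsto (fun α : ℝ => t ^ ((1 - α) / α)) (nhdsWithin 0 (Set.Ioi 0)) (nhds 0) :=
      rpow_tendsto_zero_of_atTop ht ht' hexp1
    have hv : Tendsto (fun α : ℝ => t ^ (1 / α)) (nhdsWithin 0 (Set.Ioi 0)) (nhds 0) :=
      rpow_tendsto_zero_of_atTop ht ht' hinv
    have hnum : Tendsto (fun α : ℝ => (1 - α) * (1 - t ^ (1 / α)))
        (nhdsWithin 0 (Set.Ioi 0)) (nhds (1 * (1 - 0))) :=
      hone.mul (tendsto_const_nhds.sub hv)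
    have hden : Tendsto (fun α : ℝ => 1 - t ^ ((1 - α) / α))
        (nhdsWithin 0 (Set.Ioi 0)) (nhds (1 - 0)) := tendsto_const_nhds.sub hu
    have := hnum.div hden (by norm_num)
    simpa [Pi.div_def] using this
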